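/- arXiv:0911.5450 — 2 statements merged into one kernel-verified Lean document; each statement's English description precedes it below -/
import Mathlib

section
/- Let F(z) = Σ_{k≥0} a_k z^k, and let (p_k)_{k≥0} be a probability distribution on the nonnegative integers with p_0 > 0, p_k > 0 whenever a_k ≠ 0, and Σ_{k≥1} k p_k ≤ 1. Set b_k = a_k/p_k if p_k ≠ 0 and b_k = 0 otherwise, assume b* = sup_{k≥1} |b_k| < ∞, and set w(x,t) = v(x,t)/p_0. Fix (x,t) with 0 < t ≤ √(2/b*) and |w(x,t)| + (t²/2)|b_0| ≤ 1. Then for every measurable function u on Δ(x,t) with |u(y,s)| ≤ 1 for all (y,s) ∈ Δ(x,t), one has |v(x,t) + (1/2)∫_{Δ(x,t)} F(u(y,s)) dy ds| ≤ 1. -/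
set_option maxHeartbeats 800000


open MeasureTheory Set

/-- The backward light cone (a triangle) of the space-time point `(x,t)`. -/
def lightCone (x t : ℝ) : Set (ℝ × ℝ) :=
  {q : ℝ × ℝ | 0 ≤ q.2 ∧ q.2 ≤ t ∧ |q.1 - x| ≤ t - q.2}

lemma lightCone_measurable (x t : ℝ) : MeasurableSet (lightCone x t) := by
  have : IsClosed (lightCone x t) := by
    have h1 : IsClosed {q : ℝ × ℝ | 0 ≤ q.2} := isClosed_le continuous_const continuous_snd
    have h2 : IsClosed {q : ℝ × ℝ | q.2 ≤ t} := isClosed_le continuous_snd continuous_const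
    have h3 : IsClosed {q : ℝ × ℝ | |q.1 - x| ≤ t - q.2} :=
      isClosed_le ((continuous_fst.sub continuous_const).abs)
        (continuous_const.sub continuous_snd)
    have : lightCone x t = {q : ℝ × ℝ | 0 ≤ q.2} ∩ ({q : ℝ × ℝ | q.2 ≤ t} ∩
        {q : ℝ × ℝ | |q.1 - x| ≤ t - q.2}) := rfl
    rw [this]
    exact h1.inter (h2.inter h3)
  exact this.measurableSet

lemma volume_lightCone (x t : ℝ) (ht : 0 ≤ t) :
    volume (lightCone x t) = ENNReal.ofReal (t ^ 2) := by
  have hsec : ∀ y : ℝ, Prod.mk y ⁻¹' lightCone x t = Icc 0 (t - |y - x|) := by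
    intro y
    ext s
    simp only [lightCone, mem_preimage, mem_setOf_eq, mem_Icc]
    constructor
    · rintro ⟨h1, h2, h3⟩; exact ⟨h1, by linarith⟩
    · rintro ⟨h1, h2⟩
      have : (0:ℝ) ≤ |y - x| := abs_nonneg _
      exact ⟨h1, by linarith, by linarith⟩
  rw [Measure.volume_eq_prod ℝ ℝ, Measure.prod_apply (lightCone_measurable x t)]
  simp_rw [hsec, Real.volume_Icc, sub_zero]
  -- turn the lintegral into a Bochner integral of the truncated tent function
  set g : ℝ → ℝ := fun y => max (t - |y - x|) 0 with hg
  have hof : ∀ y : ℝ, ENNReal.ofReal (t - |y - x|) = ENNReal.ofReal (g y) := by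
    intro y
    rcases le_total (t - |y - x|) 0 with h | h
    · simp [hg, ENNReal.ofReal_eq_zero.2 h, max_eq_right h]
    · simp [hg, max_eq_left h]
  simp_rw [hof]
  have hgc : Continuous g := (continuous_const.sub ((continuous_id.sub continuous_const).abs)).max continuous_const
  have hgsupp : HasCompactSupport g := by
    apply HasCompactSupport.intro (isCompact_Icc (a := x - t) (b := x + t))
    intro y hy
    simp only [mem_Icc, not_and_or, not_le] at hy
    have : t - |y - x| ≤ 0 := by
      rcases hy with h | h
      · rw [abs_sub_comm]
        have : t ≤ |x - y| := le_trans (by linarith) (le_abs_self _)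
        linarith
      · have : t ≤ |y - x| := le_trans (by linarith) (le_abs_self _)
        linarith
    simp [hg, max_eq_right this]
  have hgint : Integrable g := hgc.integrable_of_hasCompactSupport hgsupp
  rw [← MeasureTheory.ofReal_integral_eq_lintegral_ofReal hgint
    (Filter.Eventually.of_forall fun y => le_max_right _ _)]
  congr 1
  -- compute ∫ g
  have h1 : ∫ y, g y = ∫ y in Icc (x - t) (x + t), g y := by
    refine (setIntegral_eq_integral_of_forall_compl_eq_zero fun y hy => ?_).symm
    simp only [mem_Icc, not_and_or, not_le] at hy
    have : t - |y - x| ≤ 0 := by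
      rcases hy with h | h
      · have : t ≤ |y - x| := le_trans (by linarith) (neg_le_abs _)
        linarith
      · have : t ≤ |y - x| := le_trans (by linarith) (le_abs_self _)
        linarith
    simp [hg, max_eq_right this]
  have h2 : ∫ y in Icc (x - t) (x + t), g y = ∫ y in Icc (x - t) (x + t), (t - |y - x|) := by
    refine setIntegral_congr_fun measurableSet_Icc fun y hy => ?_
    simp only [mem_Icc] at hy
    have h3 : |y - x| ≤ t := abs_sub_le_iff.2 ⟨by linarith, by linarith⟩
    simp [hg, max_eq_left (by linarith : (0:ℝ) ≤ t - |y - x|)]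
  have hle : x - t ≤ x + t := by linarith
  have h3 : ∫ y in Icc (x - t) (x + t), (t - |y - x|) =
      ∫ y in (x - t)..(x + t), (t - |y - x|) := by
    rw [intervalIntegral.integral_of_le hle, MeasureTheory.integral_Icc_eq_integral_Ioc]
  have h4 : (∫ y in (x - t)..(x + t), (t - |y - x|)) = ∫ y in (-t)..t, (t - |y|) := by
    have := intervalIntegral.integral_comp_sub_right (a := x - t) (b := x + t)
      (fun z => t - |z|) x
    simpa using this
  have hc1 : Continuous fun y : ℝ => t - |y| := continuous_const.sub continuous_abs
  have h5 : (∫ y in (-t)..(0:ℝ), (t - |y|)) = ∫ y in (-t)..(0:ℝ), (t + y) := by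
    refine intervalIntegral.integral_congr fun y hy => ?_
    rw [uIcc_of_le (by linarith : -t ≤ 0)] at hy
    simp only [mem_Icc] at hy
    rw [abs_of_nonpos hy.2]; ring
  have h6 : (∫ y in (0:ℝ)..t, (t - |y|)) = ∫ y in (0:ℝ)..t, (t - y) := by
    refine intervalIntegral.integral_congr fun y hy => ?_
    rw [uIcc_of_le ht] at hy
    simp only [mem_Icc] at hy
    rw [abs_of_nonneg hy.1]
  have h7 : (∫ y in (-t)..(0:ℝ), (t + y)) = t ^ 2 / 2 := by
    rw [intervalIntegral.integral_add intervalIntegrable_const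
      intervalIntegral.intervalIntegrable_id]
    simp
    ring
  have h8 : (∫ y in (0:ℝ)..t, (t - y)) = t ^ 2 / 2 := by
    rw [intervalIntegral.integral_sub intervalIntegrable_const
      intervalIntegral.intervalIntegrable_id]
    simp
    ring
  have h9 : (∫ y in (-t)..t, (t - |y|)) = t ^ 2 := by
    rw [← intervalIntegral.integral_add_adjacent_intervals (a := -t) (b := 0) (c := t)
      (hc1.intervalIntegrable _ _) (hc1.intervalIntegrable _ _), h5, h6, h7, h8]
    ring
  rw [h1, h2, h3, h4, h9]

/-- invariance of the unit ball under the integral operator of the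
d'Alembert fixed-point equation: if `0 < t ≤ √(2/b*)` (where `b* = sup_{k≥1}|b_k|`)
and `|w(x,t)| + (t²/2)|b₀| ≤ 1`, then for any measurable `u` with `|u| ≤ 1` on `Δ(x,t)`
one has `|v(x,t) + (1/2)∫_{Δ(x,t)} F(u)| ≤ 1`. -/
theorem unit_ball_invariance
    (a : ℕ → ℝ) (ha : Summable fun k => |a k|)
    (F : ℝ → ℝ) (hFdef : ∀ z : ℝ, |z| ≤ 1 → F z = ∑' k : ℕ, a k * z ^ k)
    (p : ℕ → ℝ) (hpnn : ∀ k, 0 ≤ p k) (hpsum : HasSum p 1)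
    (hp0 : 0 < p 0) (hppos : ∀ k, a k ≠ 0 → 0 < p k)
    (hmean : Summable fun k : ℕ => (k : ℝ) * p k)
    (hmean1 : (∑' k : ℕ, (k : ℝ) * p k) ≤ 1)
    (b : ℕ → ℝ) (hb : ∀ k, b k = if p k ≠ 0 then a k / p k else 0)
    (hbdd : BddAbove (Set.range fun k : ℕ => |b (k + 1)|))
    (φ ψ : ℝ → ℝ) (v w : ℝ → ℝ → ℝ)
    (hv : ∀ x t : ℝ, v x t =
      (1 / 2) * (∫ y in (x - t)..(x + t), ψ y) + (1 / 2) * (φ (x + t) + φ (x - t)))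
    (hw : ∀ x t : ℝ, w x t = v x t / p 0)
    (x t : ℝ) (ht : 0 < t)
    (htB : t ≤ Real.sqrt (2 / (⨆ k : ℕ, |b (k + 1)|)))
    (hsmall : |w x t| + t ^ 2 / 2 * |b 0| ≤ 1)
    (u : ℝ × ℝ → ℝ) (hmeas : Measurable u)
    (hu : ∀ q ∈ lightCone x t, |u q| ≤ 1) :
    |v x t + (1 / 2) * (∫ q in lightCone x t, F (u q))| ≤ 1 := by
  set B : ℝ := ⨆ k : ℕ, |b (k + 1)| with hBdef
  have hBnn : 0 ≤ B := le_trans (abs_nonneg (b 1)) (le_ciSup hbdd 0)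
  -- B > 0, else contradiction with t > 0
  have hBpos : 0 < B := by
    rcases lt_or_eq_of_le hBnn with h | h
    · exact h
    · exfalso
      rw [← h] at htB
      simp only [div_zero, Real.sqrt_zero] at htB
      linarith
  -- t^2 * B ≤ 2
  have htB2 : t ^ 2 * B ≤ 2 := by
    have h1 : t ^ 2 ≤ 2 / B := by
      have := Real.sq_sqrt (le_of_lt (div_pos two_pos hBpos))
      calc t ^ 2 ≤ Real.sqrt (2 / B) ^ 2 := by
            apply pow_le_pow_left₀ (le_of_lt ht) htB
        _ = 2 / B := Real.sq_sqrt (le_of_lt (div_pos two_pos hBpos))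
    calc t ^ 2 * B ≤ (2 / B) * B := mul_le_mul_of_nonneg_right h1 hBpos.le
      _ = 2 := by field_simp
  -- summability facts
  have hpsummable : Summable p := hpsum.summable
  have hptail : Summable fun k => p (k + 1) := (summable_nat_add_iff 1).2 hpsummable
  have hatail : Summable fun k => |a (k + 1)| := (summable_nat_add_iff 1).2 ha
  have htail : (∑' k : ℕ, p (k + 1)) = 1 - p 0 := by
    have h := hpsummable.tsum_eq_zero_add
    rw [hpsum.tsum_eq] at h
    linarith
  have hp0le : p 0 ≤ 1 := by
    have h : (∑' k : ℕ, p (k + 1)) ≥ 0 := tsum_nonneg fun k => hpnn _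
    linarith [htail]
  -- |a (k+1)| ≤ B * p (k+1)
  have hak : ∀ k : ℕ, |a (k + 1)| ≤ B * p (k + 1) := by
    intro k
    by_cases h : a (k + 1) = 0
    · simp only [h, abs_zero]
      exact mul_nonneg hBnn (hpnn _)
    · have hpk := hppos _ h
      have hbk : b (k + 1) = a (k + 1) / p (k + 1) := by
        rw [hb]; simp [ne_of_gt hpk]
      have hle : |b (k + 1)| ≤ B := le_ciSup hbdd k
      have : |a (k + 1)| = |b (k + 1)| * p (k + 1) := by
        rw [hbk, abs_div, abs_of_pos hpk]
        field_simp
      rw [this]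
      exact mul_le_mul_of_nonneg_right hle (hpnn _)
  set C : ℝ := |a 0| + B * (1 - p 0) with hCdef
  -- bound on F
  have hFbound : ∀ z : ℝ, |z| ≤ 1 → |F z| ≤ C := by
    intro z hz
    rw [hFdef z hz]
    have hterm : ∀ k : ℕ, |a k * z ^ k| ≤ |a k| := by
      intro k
      rw [abs_mul, abs_pow]
      calc |a k| * |z| ^ k ≤ |a k| * 1 := by
            apply mul_le_mul_of_nonneg_left _ (abs_nonneg _)
            exact pow_le_one₀ (abs_nonneg _) hz
        _ = |a k| := mul_one _
    have hsz : Summable fun k => |a k * z ^ k| :=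
      Summable.of_nonneg_of_le (fun k => abs_nonneg _) hterm ha
    have habs : |∑' k : ℕ, a k * z ^ k| ≤ ∑' k : ℕ, |a k * z ^ k| := by
      have h' := norm_tsum_le_tsum_norm (f := fun k : ℕ => a k * z ^ k)
        (hsz.congr fun k => (Real.norm_eq_abs _).symm)
      simp only [Real.norm_eq_abs] at h'
      exact h'
    calc |∑' k : ℕ, a k * z ^ k| ≤ ∑' k : ℕ, |a k * z ^ k| := habs
      _ ≤ ∑' k : ℕ, |a k| := Summable.tsum_le_tsum hterm hsz ha
      _ = |a 0| + ∑' k : ℕ, |a (k + 1)| := ha.tsum_eq_zero_add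
      _ ≤ |a 0| + ∑' k : ℕ, B * p (k + 1) := by
          refine add_le_add_right (Summable.tsum_le_tsum hak hatail (hptail.mul_left B)) _
      _ = |a 0| + B * (1 - p 0) := by rw [tsum_mul_left, htail]
  -- bound on the set integral
  have hvol : volume (lightCone x t) = ENNReal.ofReal (t ^ 2) := volume_lightCone x t ht.le
  have hvolfin : volume (lightCone x t) < ⊤ := by rw [hvol]; exact ENNReal.ofReal_lt_top
  have hint : |∫ q in lightCone x t, F (u q)| ≤ C * t ^ 2 := by
    have h := norm_setIntegral_le_of_norm_le_const (μ := volume) (s := lightCone x t)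
      (f := fun q => F (u q)) (C := C) hvolfin
      (fun q hq => by simpa [Real.norm_eq_abs] using hFbound (u q) (hu q hq))
    rw [Measure.real, hvol, ENNReal.toReal_ofReal (by positivity)] at h
    simpa [Real.norm_eq_abs] using h
  -- arithmetic conclusion
  have hb0 : b 0 = a 0 / p 0 := by rw [hb]; simp [ne_of_gt hp0]
  have ha0 : |a 0| = |b 0| * p 0 := by
    rw [hb0, abs_div, abs_of_pos hp0]
    field_simp
  have hwv : |w x t| = |v x t| / p 0 := by
    rw [hw, abs_div, abs_of_pos hp0]
  have hsmall' : |v x t| + t ^ 2 / 2 * |a 0| ≤ p 0 := by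
    rw [hwv] at hsmall
    rw [ha0]
    have h := mul_le_mul_of_nonneg_right hsmall (le_of_lt hp0)
    have hexp : (|v x t| / p 0 + t ^ 2 / 2 * |b 0|) * p 0
        = |v x t| + t ^ 2 / 2 * (|b 0| * p 0) := by
      field_simp
    rw [hexp, one_mul] at h
    exact h
  have hB1 : t ^ 2 / 2 * (B * (1 - p 0)) ≤ 1 - p 0 := by
    have h1 : t ^ 2 / 2 * B ≤ 1 := by linarith
    have h2 : 0 ≤ 1 - p 0 := by linarith
    calc t ^ 2 / 2 * (B * (1 - p 0)) = (t ^ 2 / 2 * B) * (1 - p 0) := by ring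
      _ ≤ 1 * (1 - p 0) := mul_le_mul_of_nonneg_right h1 h2
      _ = 1 - p 0 := one_mul _
  calc |v x t + (1 / 2) * (∫ q in lightCone x t, F (u q))|
      ≤ |v x t| + |(1 / 2) * (∫ q in lightCone x t, F (u q))| := abs_add_le _ _
    _ = |v x t| + (1 / 2) * |∫ q in lightCone x t, F (u q)| := by
        rw [abs_mul, abs_of_pos (by norm_num : (0:ℝ) < 1/2)]
    _ ≤ |v x t| + (1 / 2) * (C * t ^ 2) := by
        have : (0:ℝ) ≤ 1/2 := by norm_num
        nlinarith [hint]
    _ = |v x t| + t ^ 2 / 2 * |a 0| + t ^ 2 / 2 * (B * (1 - p 0)) := by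
        rw [hCdef]; ring
    _ ≤ p 0 + (1 - p 0) := add_le_add hsmall' hB1
    _ = 1 := by ring
end

section
/- Let F(z) = Σ_{k≥0} a_k z^k, and let (p_k)_{k≥0} be a probability distribution on the nonnegative integers with p_0 > 0, p_k > 0 whenever a_k ≠ 0, and Σ_{k≥1} k p_k ≤ 1. Set b_k = a_k/p_k if p_k ≠ 0 and b_k = 0 otherwise, assume b* = sup_{k≥1} |b_k| < ∞, and set w(x,t) = v(x,t)/p_0. Let T > 0 satisfy T ≤ √(2/b*) and sup_{x∈ℝ} |w(x,t)| + (t²/2)|b_0| ≤ 1 for all t ∈ [0,T). If u and ũ are two mild solutions of □u = F(u) on [0,T) with |u(x,t)| ≤ 1 and |ũ(x,t)| ≤ 1 for all (x,t) ∈ ℝ × [0,T), then u = ũ on ℝ × [0,T). -/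
open MeasureTheory Set

section Aux
variable (a : ℕ → ℝ)

lemma aux_abs_pow_sub_pow (z z' : ℝ) (hz : |z| ≤ 1) (hz' : |z'| ≤ 1) :
    ∀ k : ℕ, |z ^ k - z' ^ k| ≤ k * |z - z'| := by
  intro k
  induction k with
  | zero => simp
  | succ n ih =>
    have h1 : z ^ (n + 1) - z' ^ (n + 1) = z * (z ^ n - z' ^ n) + (z - z') * z' ^ n := by ring
    have h2 : |z ^ (n + 1) - z' ^ (n + 1)| ≤ |z| * |z ^ n - z' ^ n| + |z - z'| * |z' ^ n| := by
      rw [h1]; exact (abs_add_le _ _).trans (by rw [abs_mul, abs_mul])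
    have h3 : |z| * |z ^ n - z' ^ n| ≤ 1 * (n * |z - z'|) :=
      mul_le_mul hz ih (abs_nonneg _) zero_le_one
    have h4 : |z - z'| * |z' ^ n| ≤ |z - z'| * 1 := by
      have : |z' ^ n| ≤ 1 := by
        rw [abs_pow]; exact pow_le_one₀ (abs_nonneg _) hz'
      exact mul_le_mul_of_nonneg_left this (abs_nonneg _)
    calc |z ^ (n + 1) - z' ^ (n + 1)| ≤ 1 * (n * |z - z'|) + |z - z'| * 1 :=
          h2.trans (add_le_add h3 h4)
      _ = (n + 1 : ℕ) * |z - z'| := by push_cast; ring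

lemma aux_lip (ha : Summable fun k => |a k|)
    (hL : Summable fun k : ℕ => (k : ℝ) * |a k|) (z z' : ℝ) (hz : |z| ≤ 1) (hz' : |z'| ≤ 1) :
    |(∑' k : ℕ, a k * z ^ k) - ∑' k : ℕ, a k * z' ^ k| ≤
      (∑' k : ℕ, (k : ℝ) * |a k|) * |z - z'| := by
  have hs : Summable fun k : ℕ => a k * z ^ k := by
    refine Summable.of_norm_bounded ha fun k => ?_
    rw [Real.norm_eq_abs, abs_mul, abs_pow]
    exact mul_le_of_le_one_right (abs_nonneg _) (pow_le_one₀ (abs_nonneg _) hz)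
  have hs' : Summable fun k : ℕ => a k * z' ^ k := by
    refine Summable.of_norm_bounded ha fun k => ?_
    rw [Real.norm_eq_abs, abs_mul, abs_pow]
    exact mul_le_of_le_one_right (abs_nonneg _) (pow_le_one₀ (abs_nonneg _) hz')
  rw [← hs.tsum_sub hs']
  have hbd : ∀ k : ℕ, |a k * z ^ k - a k * z' ^ k| ≤ (k : ℝ) * |a k| * |z - z'| := by
    intro k
    have h : a k * z ^ k - a k * z' ^ k = a k * (z ^ k - z' ^ k) := by ring
    rw [h, abs_mul]
    calc |a k| * |z ^ k - z' ^ k| ≤ |a k| * ((k : ℝ) * |z - z'|) :=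
          mul_le_mul_of_nonneg_left (aux_abs_pow_sub_pow z z' hz hz' k) (abs_nonneg _)
      _ = (k : ℝ) * |a k| * |z - z'| := by ring
  have hsb : Summable fun k : ℕ => (k : ℝ) * |a k| * |z - z'| := hL.mul_right _
  have hsd : Summable fun k : ℕ => a k * z ^ k - a k * z' ^ k := hs.sub hs'
  have habs : Summable fun k : ℕ => ‖a k * z ^ k - a k * z' ^ k‖ := by
    simpa [Real.norm_eq_abs] using hsd.abs
  calc |∑' k : ℕ, (a k * z ^ k - a k * z' ^ k)|
      ≤ ∑' k : ℕ, |a k * z ^ k - a k * z' ^ k| := by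
        simpa [Real.norm_eq_abs] using norm_tsum_le_tsum_norm habs
    _ ≤ ∑' k : ℕ, (k : ℝ) * |a k| * |z - z'| := Summable.tsum_le_tsum hbd hsd.abs hsb
    _ = (∑' k : ℕ, (k : ℝ) * |a k|) * |z - z'| := tsum_mul_right

lemma lightCone_isClosed (x t : ℝ) : IsClosed (lightCone x t) := by
  have h : lightCone x t =
      {q : ℝ × ℝ | 0 ≤ q.2} ∩ ({q : ℝ × ℝ | q.2 ≤ t} ∩ {q : ℝ × ℝ | |q.1 - x| ≤ t - q.2}) := by
    ext q; simp [lightCone, and_assoc]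
  rw [h]
  exact (isClosed_le continuous_const continuous_snd).inter
    ((isClosed_le continuous_snd continuous_const).inter
      (isClosed_le ((continuous_fst.sub continuous_const).abs)
        (continuous_const.sub continuous_snd)))

lemma lightCone_subset (x t : ℝ) : lightCone x t ⊆ Icc (x - t) (x + t) ×ˢ Icc 0 t := by
  rintro ⟨y, s⟩ ⟨h0, hst, habs⟩
  rw [abs_le] at habs
  exact ⟨⟨by simp at habs h0 hst ⊢; linarith [habs.1], by simp at habs h0 hst ⊢; linarith [habs.2]⟩,
    ⟨h0, hst⟩⟩

end Aux

/-- uniqueness part of Theorem 2: if `T ≤ √(2/b*)` and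
`sup_x |w(x,t)| + (t²/2)|b₀| ≤ 1` for all `t ∈ [0,T)`, then any two mild solutions
of `□u = F(u)` on `[0,T)` bounded by `1` coincide. -/
theorem mild_solution_unique
    (a : ℕ → ℝ) (ha : Summable fun k => |a k|)
    (F : ℝ → ℝ) (hFdef : ∀ z : ℝ, |z| ≤ 1 → F z = ∑' k : ℕ, a k * z ^ k)
    (p : ℕ → ℝ) (hpnn : ∀ k, 0 ≤ p k) (hpsum : HasSum p 1)
    (hp0 : 0 < p 0) (hppos : ∀ k, a k ≠ 0 → 0 < p k)
    (hmean : Summable fun k : ℕ => (k : ℝ) * p k)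
    (hmean1 : (∑' k : ℕ, (k : ℝ) * p k) ≤ 1)
    (b : ℕ → ℝ) (hb : ∀ k, b k = if p k ≠ 0 then a k / p k else 0)
    (hbdd : BddAbove (Set.range fun k : ℕ => |b (k + 1)|))
    (φ ψ : ℝ → ℝ) (v w : ℝ → ℝ → ℝ)
    (hv : ∀ x t : ℝ, v x t =
      (1 / 2) * (∫ y in (x - t)..(x + t), ψ y) + (1 / 2) * (φ (x + t) + φ (x - t)))
    (hw : ∀ x t : ℝ, w x t = v x t / p 0)
    (T : ℝ) (hT : 0 < T)
    (hTB : T ≤ Real.sqrt (2 / (⨆ k : ℕ, |b (k + 1)|)))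
    (hsmall : ∀ t : ℝ, 0 ≤ t → t < T → ∀ x : ℝ, |w x t| + t ^ 2 / 2 * |b 0| ≤ 1)
    (u u' : ℝ → ℝ → ℝ)
    (hmeas : Measurable (fun q : ℝ × ℝ => u q.1 q.2))
    (hmeas' : Measurable (fun q : ℝ × ℝ => u' q.1 q.2))
    (hub : ∀ x t : ℝ, 0 ≤ t → t < T → |u x t| ≤ 1)
    (hub' : ∀ x t : ℝ, 0 ≤ t → t < T → |u' x t| ≤ 1)
    (hmild : ∀ x t : ℝ, 0 ≤ t → t < T →
      u x t = v x t + (1 / 2) * (∫ q in lightCone x t, F (u q.1 q.2)))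
    (hmild' : ∀ x t : ℝ, 0 ≤ t → t < T →
      u' x t = v x t + (1 / 2) * (∫ q in lightCone x t, F (u' q.1 q.2))) :
    ∀ x t : ℝ, 0 ≤ t → t < T → u x t = u' x t := by
  classical
  set bs : ℝ := ⨆ k : ℕ, |b (k + 1)| with hbs
  have hbsk : ∀ k : ℕ, |b (k + 1)| ≤ bs := fun k => le_ciSup hbdd k
  have hak : ∀ k : ℕ, (k : ℝ) * |a k| ≤ bs * ((k : ℝ) * p k) := by
    intro k
    cases k with
    | zero => simp
    | succ n =>
      by_cases hpk : p (n + 1) = 0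
      · have ha0 : a (n + 1) = 0 := by
          by_contra h; exact absurd hpk (ne_of_gt (hppos _ h))
        simp [ha0, hpk]
      · have hbk : b (n + 1) = a (n + 1) / p (n + 1) := by rw [hb]; simp [hpk]
        have hpk' : 0 < p (n + 1) := lt_of_le_of_ne (hpnn _) (Ne.symm hpk)
        have heq : |a (n + 1)| = |b (n + 1)| * p (n + 1) := by
          rw [hbk, abs_div, abs_of_pos hpk']; field_simp
        rw [heq]
        have h1 : |b (n + 1)| * p (n + 1) ≤ bs * p (n + 1) :=
          mul_le_mul_of_nonneg_right (hbsk n) (hpnn _)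
        calc ((n + 1 : ℕ) : ℝ) * (|b (n + 1)| * p (n + 1))
            ≤ ((n + 1 : ℕ) : ℝ) * (bs * p (n + 1)) :=
              mul_le_mul_of_nonneg_left h1 (by positivity)
          _ = bs * (((n + 1 : ℕ) : ℝ) * p (n + 1)) := by ring
  have hLsum : Summable fun k : ℕ => (k : ℝ) * |a k| :=
    Summable.of_nonneg_of_le (fun k => by positivity) hak (hmean.mul_left bs)
  set L : ℝ := ∑' k : ℕ, (k : ℝ) * |a k| with hLdef
  have hL0 : 0 ≤ L := tsum_nonneg fun k => by positivity
  have lip : ∀ z z' : ℝ, |z| ≤ 1 → |z'| ≤ 1 → |F z - F z'| ≤ L * |z - z'| := by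
    intro z z' hz hz'
    rw [hFdef z hz, hFdef z' hz']
    exact aux_lip a ha hLsum z z' hz hz'
  set A : ℝ := ∑' k : ℕ, |a k| with hA
  set U : ℝ × ℝ → ℝ := fun q => max (-1) (min 1 (u q.1 q.2)) with hU
  set U' : ℝ × ℝ → ℝ := fun q => max (-1) (min 1 (u' q.1 q.2)) with hU'
  have hUmeas : Measurable U := measurable_const.max (measurable_const.min hmeas)
  have hU'meas : Measurable U' := measurable_const.max (measurable_const.min hmeas')
  have hUb : ∀ q, |U q| ≤ 1 := by
    intro q; rw [abs_le]
    exact ⟨le_max_left _ _, max_le (by norm_num) (min_le_left _ _)⟩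
  have hU'b : ∀ q, |U' q| ≤ 1 := by
    intro q; rw [abs_le]
    exact ⟨le_max_left _ _, max_le (by norm_num) (min_le_left _ _)⟩
  have hUeq : ∀ q : ℝ × ℝ, |u q.1 q.2| ≤ 1 → U q = u q.1 q.2 := by
    intro q h; rw [abs_le] at h
    simp only [hU]; rw [min_eq_right h.2, max_eq_right h.1]
  have hU'eq : ∀ q : ℝ × ℝ, |u' q.1 q.2| ≤ 1 → U' q = u' q.1 q.2 := by
    intro q h; rw [abs_le] at h
    simp only [hU']; rw [min_eq_right h.2, max_eq_right h.1]
  have hsumm : ∀ (V : ℝ × ℝ → ℝ), (∀ q, |V q| ≤ 1) →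
      ∀ q, Summable fun k : ℕ => a k * V q ^ k := by
    intro V hVb q
    refine Summable.of_norm_bounded ha fun k => ?_
    rw [Real.norm_eq_abs, abs_mul, abs_pow]
    exact mul_le_of_le_one_right (abs_nonneg _) (pow_le_one₀ (abs_nonneg _) (hVb q))
  set G : ℝ × ℝ → ℝ := fun q => ∑' k : ℕ, a k * U q ^ k with hG
  set G' : ℝ × ℝ → ℝ := fun q => ∑' k : ℕ, a k * U' q ^ k with hG'
  have hGmeas : Measurable G := by
    refine measurable_of_tendsto_metrizable
      (f := fun n q => ∑ k ∈ Finset.range n, a k * U q ^ k) (fun n => ?_) ?_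
    · exact Finset.measurable_sum _ fun k _ => (hUmeas.pow_const k).const_mul _
    · rw [tendsto_pi_nhds]; intro q
      exact (hsumm U hUb q).hasSum.tendsto_sum_nat
  have hG'meas : Measurable G' := by
    refine measurable_of_tendsto_metrizable
      (f := fun n q => ∑ k ∈ Finset.range n, a k * U' q ^ k) (fun n => ?_) ?_
    · exact Finset.measurable_sum _ fun k _ => (hU'meas.pow_const k).const_mul _
    · rw [tendsto_pi_nhds]; intro q
      exact (hsumm U' hU'b q).hasSum.tendsto_sum_nat
  have hGbd : ∀ (V : ℝ × ℝ → ℝ) (hVb : ∀ q, |V q| ≤ 1) (q : ℝ × ℝ),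
      |∑' k : ℕ, a k * V q ^ k| ≤ A := by
    intro V hVb q
    have h1 : Summable fun k : ℕ => ‖a k * V q ^ k‖ := by
      simpa only [Real.norm_eq_abs] using (hsumm V hVb q).abs
    calc |∑' k : ℕ, a k * V q ^ k| ≤ ∑' k : ℕ, |a k * V q ^ k| := by
          simpa only [Real.norm_eq_abs] using norm_tsum_le_tsum_norm h1
      _ ≤ ∑' k : ℕ, |a k| := by
          refine Summable.tsum_le_tsum (fun k => ?_) (hsumm V hVb q).abs ha
          rw [abs_mul, abs_pow]
          exact mul_le_of_le_one_right (abs_nonneg _) (pow_le_one₀ (abs_nonneg _) (hVb q))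
  -- the key induction
  have key : ∀ n : ℕ, ∀ x t : ℝ, 0 ≤ t → t < T →
      |u x t - u' x t| ≤ 2 * (2 * L) ^ n * (n.factorial : ℝ) / ((2 * n).factorial : ℝ)
        * t ^ (2 * n) := by
    intro n
    induction n with
    | zero =>
      intro x t ht0 htT
      have h1 := hub x t ht0 htT
      have h2 := hub' x t ht0 htT
      have h3 : |u x t - u' x t| ≤ |u x t| + |u' x t| := abs_sub _ _
      simp only [pow_zero, mul_one, Nat.mul_zero, Nat.factorial_zero, Nat.cast_one]
      norm_num
      linarith
    | succ n ih =>
      intro x t ht0 htT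
      set K : ℝ := 2 * (2 * L) ^ n * (n.factorial : ℝ) / ((2 * n).factorial : ℝ) with hK
      have hK0 : 0 ≤ K := by positivity
      have hcm : MeasurableSet (lightCone x t) := (lightCone_isClosed x t).measurableSet
      have hsub := lightCone_subset x t
      have hrectfin : volume (Icc (x - t) (x + t) ×ˢ Icc (0 : ℝ) t) < ⊤ :=
        (isCompact_Icc.prod isCompact_Icc).measure_lt_top
      have hconefin : volume (lightCone x t) ≠ ⊤ :=
        ((measure_mono hsub).trans_lt hrectfin).ne
      have hGeq : ∀ q ∈ lightCone x t, F (u q.1 q.2) = G q := by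
        intro q hq
        have h1 : |u q.1 q.2| ≤ 1 := hub q.1 q.2 hq.1 (lt_of_le_of_lt hq.2.1 htT)
        rw [hFdef _ h1]; simp only [hG]; rw [hUeq q h1]
      have hG'eq : ∀ q ∈ lightCone x t, F (u' q.1 q.2) = G' q := by
        intro q hq
        have h1 : |u' q.1 q.2| ≤ 1 := hub' q.1 q.2 hq.1 (lt_of_le_of_lt hq.2.1 htT)
        rw [hFdef _ h1]; simp only [hG']; rw [hU'eq q h1]
      have hGint : IntegrableOn G (lightCone x t) :=
        Measure.integrableOn_of_bounded hconefin hGmeas.aestronglyMeasurable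
          (ae_of_all _ fun q => by simpa [Real.norm_eq_abs] using hGbd U hUb q)
      have hG'int : IntegrableOn G' (lightCone x t) :=
        Measure.integrableOn_of_bounded hconefin hG'meas.aestronglyMeasurable
          (ae_of_all _ fun q => by simpa [Real.norm_eq_abs] using hGbd U' hU'b q)
      have hdiff : u x t - u' x t = (1 / 2) * ∫ q in lightCone x t, (G q - G' q) := by
        rw [hmild x t ht0 htT, hmild' x t ht0 htT,
          setIntegral_congr_fun hcm hGeq, setIntegral_congr_fun hcm hG'eq,
          integral_sub hGint hG'int]
        ring
      set bnd : ℝ × ℝ → ℝ := fun q => L * K * q.2 ^ (2 * n) with hbnd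
      have hbndc : Continuous bnd := by
        apply Continuous.mul continuous_const
        exact continuous_snd.pow _
      have hbint : IntegrableOn bnd (Icc (x - t) (x + t) ×ˢ Icc (0 : ℝ) t) :=
        hbndc.continuousOn.integrableOn_compact (isCompact_Icc.prod isCompact_Icc)
      have hbint' : IntegrableOn bnd (lightCone x t) := hbint.mono_set hsub
      have hptw : ∀ q ∈ lightCone x t, |G q - G' q| ≤ bnd q := by
        intro q hq
        have hsT : q.2 < T := lt_of_le_of_lt hq.2.1 htT
        have h1 := hub q.1 q.2 hq.1 hsT
        have h1' := hub' q.1 q.2 hq.1 hsT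
        rw [← hGeq q hq, ← hG'eq q hq]
        calc |F (u q.1 q.2) - F (u' q.1 q.2)| ≤ L * |u q.1 q.2 - u' q.1 q.2| :=
              lip _ _ h1 h1'
          _ ≤ L * (K * q.2 ^ (2 * n)) :=
              mul_le_mul_of_nonneg_left (ih q.1 q.2 hq.1 hsT) hL0
          _ = bnd q := by simp only [hbnd]; ring
      have habsint : IntegrableOn (fun q => |G q - G' q|) (lightCone x t) := by
        exact (hGint.sub hG'int).norm
      have hIb : |∫ q in lightCone x t, (G q - G' q)| ≤ ∫ q in lightCone x t, bnd q := by
        calc |∫ q in lightCone x t, (G q - G' q)|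
            ≤ ∫ q in lightCone x t, |G q - G' q| := by
              simpa [Real.norm_eq_abs] using
                norm_integral_le_integral_norm (μ := volume.restrict (lightCone x t))
                  (fun q => G q - G' q)
          _ ≤ ∫ q in lightCone x t, bnd q :=
              setIntegral_mono_on habsint hbint' hcm hptw
      have hmono : ∫ q in lightCone x t, bnd q
          ≤ ∫ q in Icc (x - t) (x + t) ×ˢ Icc (0 : ℝ) t, bnd q :=
        setIntegral_mono_set hbint (ae_of_all _ fun q => by
          simp only [hbnd]
          have h1 : (0:ℝ) ≤ q.2 ^ (2 * n) := by rw [pow_mul]; positivity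
          exact mul_nonneg (mul_nonneg hL0 hK0) h1)
          (HasSubset.Subset.eventuallyLE hsub)
      have hone : ∫ y in Icc (x - t) (x + t), (1 : ℝ) = 2 * t := by
        simp only [setIntegral_const, Real.volume_Icc, smul_eq_mul, mul_one]
        rw [Real.volume_real_Icc_of_le (by linarith)]
        ring
      have hpowint : ∫ s in Icc (0 : ℝ) t, L * K * s ^ (2 * n)
          = L * K * (t ^ (2 * n + 1) / (2 * n + 1)) := by
        rw [MeasureTheory.integral_Icc_eq_integral_Ioc,
          ← intervalIntegral.integral_of_le ht0, intervalIntegral.integral_const_mul,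
          integral_pow]
        rw [zero_pow (by omega)]
        push_cast
        ring
      have hrect : ∫ q in Icc (x - t) (x + t) ×ˢ Icc (0 : ℝ) t, bnd q
          = 2 * t * (L * K * (t ^ (2 * n + 1) / (2 * n + 1))) := by
        have hsplit : ∫ q in Icc (x - t) (x + t) ×ˢ Icc (0 : ℝ) t, bnd q
            = (∫ y in Icc (x - t) (x + t), (1 : ℝ))
              * ∫ s in Icc (0 : ℝ) t, L * K * s ^ (2 * n) := by
          rw [Measure.volume_eq_prod, ← setIntegral_prod_mul]
          refine setIntegral_congr_fun (measurableSet_Icc.prod measurableSet_Icc)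
            fun q _ => ?_
          simp only [hbnd, one_mul]
        rw [hsplit, hone, hpowint]
      have hfe : (((2 * (n + 1)).factorial : ℕ) : ℝ)
          = (2 * (n : ℝ) + 2) * (2 * (n : ℝ) + 1) * (((2 * n).factorial : ℕ) : ℝ) := by
        have h : 2 * (n + 1) = (2 * n + 1) + 1 := by ring
        rw [h, Nat.factorial_succ, Nat.factorial_succ]
        push_cast
        ring
      have hfinal : (1 / 2) * (2 * t * (L * K * (t ^ (2 * n + 1) / (2 * n + 1))))
          = 2 * (2 * L) ^ (n + 1) * ((n + 1).factorial : ℝ) / ((2 * (n + 1)).factorial : ℝ)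
            * t ^ (2 * (n + 1)) := by
        rw [hfe, hK]
        have h2n : ((2 * n).factorial : ℝ) ≠ 0 := Nat.cast_ne_zero.mpr (Nat.factorial_ne_zero _)
        have h2n1 : (2 * (n : ℝ) + 1) ≠ 0 := by positivity
        have h2n2 : (2 * (n : ℝ) + 2) ≠ 0 := by positivity
        have hts : t ^ (2 * (n + 1)) = t ^ (2 * n + 1) * t := by
          rw [← pow_succ]; ring_nf
        have hps : (2 * L) ^ (n + 1) = (2 * L) ^ n * (2 * L) := pow_succ _ _
        rw [hts, hps, Nat.factorial_succ]
        push_cast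
        field_simp
      calc |u x t - u' x t| = (1 / 2) * |∫ q in lightCone x t, (G q - G' q)| := by
            rw [hdiff, abs_mul]; norm_num
        _ ≤ (1 / 2) * ∫ q in Icc (x - t) (x + t) ×ˢ Icc (0 : ℝ) t, bnd q := by
            have := hIb.trans hmono
            linarith
        _ = (1 / 2) * (2 * t * (L * K * (t ^ (2 * n + 1) / (2 * n + 1)))) := by rw [hrect]
        _ = _ := hfinal
  -- pass to the limit
  intro x t ht0 htT
  have hseq : ∀ n : ℕ, |u x t - u' x t| ≤ 2 * (2 * L * t ^ 2) ^ n / (n.factorial : ℝ) := by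
    intro n
    refine (key n x t ht0 htT).trans ?_
    have hfl : ((n.factorial : ℕ) : ℝ) * ((n.factorial : ℕ) : ℝ) ≤ (((2 * n).factorial : ℕ) : ℝ) := by
      have h := Nat.factorial_mul_factorial_dvd_factorial_add n n
      have h2 : n.factorial * n.factorial ≤ (n + n).factorial :=
        Nat.le_of_dvd (Nat.factorial_pos _) h
      have h3 : n + n = 2 * n := by ring
      rw [h3] at h2
      exact_mod_cast h2
    have h1 : ((n.factorial : ℕ) : ℝ) / (((2 * n).factorial : ℕ) : ℝ)
        ≤ 1 / ((n.factorial : ℕ) : ℝ) := by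
      rw [div_le_div_iff₀ (by positivity) (by positivity)]
      calc ((n.factorial : ℕ) : ℝ) * ((n.factorial : ℕ) : ℝ)
          ≤ (((2 * n).factorial : ℕ) : ℝ) := hfl
        _ = 1 * (((2 * n).factorial : ℕ) : ℝ) := (one_mul _).symm
    calc 2 * (2 * L) ^ n * ((n.factorial : ℕ) : ℝ) / (((2 * n).factorial : ℕ) : ℝ) * t ^ (2 * n)
        = (2 * (2 * L) ^ n * (t ^ 2) ^ n)
          * (((n.factorial : ℕ) : ℝ) / (((2 * n).factorial : ℕ) : ℝ)) := by
          rw [pow_mul]; ring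
      _ ≤ (2 * (2 * L) ^ n * (t ^ 2) ^ n) * (1 / ((n.factorial : ℕ) : ℝ)) := by
          refine mul_le_mul_of_nonneg_left h1 ?_
          have h2L : (0:ℝ) ≤ 2 * L := by linarith
          have := pow_nonneg h2L n
          have := pow_nonneg (sq_nonneg t) n
          nlinarith
      _ = 2 * (2 * L * t ^ 2) ^ n / ((n.factorial : ℕ) : ℝ) := by
          rw [mul_pow]; ring
  have hlim : Filter.Tendsto (fun n : ℕ => 2 * (2 * L * t ^ 2) ^ n / (n.factorial : ℝ))
      Filter.atTop (nhds 0) := by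
    have h := (Real.summable_pow_div_factorial (2 * L * t ^ 2)).tendsto_atTop_zero
    have h2 := h.const_mul (2 : ℝ)
    simpa [mul_div_assoc] using h2
  have hle : |u x t - u' x t| ≤ 0 := ge_of_tendsto' hlim hseq
  have : u x t - u' x t = 0 := by
    have := abs_nonneg (u x t - u' x t)
    have habs : |u x t - u' x t| = 0 := le_antisymm hle this
    exact abs_eq_zero.mp habs
  linarith
end
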